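/- If x^u ∈ M_J and x^u is an indispensable monomial of the toric ideal I_A, then x^u is an indispensable monomial of J. -/

import Mathlib

open MvPolynomial

variable (K : Type*) [Field K]

/-- The `A`-degree of an exponent vector `u ∈ ℕ^n` with respect to a configuration
`a : Fin n → (Fin d → ℤ)`, namely `∑ i, u i • a i ∈ ℤ^d`. -/
noncomputable def degA {n d : ℕ} (a : Fin n → Fin d → ℤ) (u : Fin n →₀ ℕ) : Fin d → ℤ :=
  ∑ i, (u i : ℤ) • a i

/-- The toric ideal of the configuration `A = {a_1, …, a_n} ⊂ ℤ^d`: the ideal generated by all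
binomials `x^u - x^v` with `∑ u_i a_i = ∑ v_i a_i`. -/
noncomputable def toricIdeal {n d : ℕ} (a : Fin n → Fin d → ℤ) :
    Ideal (MvPolynomial (Fin n) K) :=
  Ideal.span { f | ∃ u v : Fin n →₀ ℕ, degA a u = degA a v ∧
    f = monomial u (1 : K) - monomial v (1 : K) }

/-- The monoid `ℕA` has no nonzero units: if `b ∈ ℕA` and `-b ∈ ℕA` then `b = 0`. -/
def NoUnits {n d : ℕ} (a : Fin n → Fin d → ℤ) : Prop :=
  ∀ u v : Fin n →₀ ℕ, degA a u + degA a v = 0 → degA a u = 0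

/-- `J` is an `A`-homogeneous pure difference binomial ideal: it is generated by binomials
`x^u - x^v` with `deg_A(x^u) = deg_A(x^v)`. -/
def IsAHomogPureDiff {n d : ℕ} (a : Fin n → Fin d → ℤ)
    (J : Ideal (MvPolynomial (Fin n) K)) : Prop :=
  ∃ S : Set (MvPolynomial (Fin n) K),
    (∀ f ∈ S, ∃ u v : Fin n →₀ ℕ, degA a u = degA a v ∧
      f = monomial u (1 : K) - monomial v (1 : K)) ∧
    J = Ideal.span S

/-- `S` is a set of binomials generating `J`. -/
def IsBinomGenSet {σ : Type*} (J : Ideal (MvPolynomial σ K)) (S : Set (MvPolynomial σ K)) :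
    Prop :=
  (∀ f ∈ S, ∃ u v : σ →₀ ℕ, f = monomial u (1 : K) - monomial v (1 : K)) ∧
  Ideal.span S = J

/-- The monomial `x^u` is an indispensable monomial of `J`: every set of binomials generating `J`
contains a binomial one of whose monomials is `x^u`. -/
def IndispMonomial {σ : Type*} (J : Ideal (MvPolynomial σ K)) (u : σ →₀ ℕ) : Prop :=
  ∀ S : Set (MvPolynomial σ K), IsBinomGenSet K J S → ∃ f ∈ S, u ∈ f.support

/-- `f` is an indispensable binomial of `J`: every set of binomials generating `J` contains
`f` or `-f`. -/
def IndispBinomial {σ : Type*} (J : Ideal (MvPolynomial σ K)) (f : MvPolynomial σ K) : Prop :=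
  ∀ S : Set (MvPolynomial σ K), IsBinomGenSet K J S → f ∈ S ∨ -f ∈ S

/-- `M_J`: the monomial ideal generated by all monomials `x^u` for which there exists a nonzero
binomial `x^u - x^v ∈ J`. -/
noncomputable def MIdeal {n : ℕ} (J : Ideal (MvPolynomial (Fin n) K)) :
    Ideal (MvPolynomial (Fin n) K) :=
  Ideal.span { m | ∃ u v : Fin n →₀ ℕ, u ≠ v ∧
    (monomial u (1 : K) - monomial v (1 : K)) ∈ J ∧ m = monomial u (1 : K) }

/-- The edge relation of the graph `G_b(J)`: two (distinct) monomials `x^u`, `x^v` are joined by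
an edge iff `gcd(x^u, x^v) ≠ 1` and there is a monomial `x^w ≠ 1` dividing `gcd(x^u, x^v)` with
`x^{u-w} - x^{v-w} ∈ J`. -/
def GEdge {n : ℕ} (J : Ideal (MvPolynomial (Fin n) K)) (u v : Fin n →₀ ℕ) : Prop :=
  u ≠ v ∧ ¬ Disjoint u.support v.support ∧
  ∃ w : Fin n →₀ ℕ, w ≠ 0 ∧ w ≤ u ∧ w ≤ v ∧
    (monomial (u - w) (1 : K) - monomial (v - w) (1 : K)) ∈ J

lemma degA_add {n d : ℕ} (a : Fin n → Fin d → ℤ) (p q : Fin n →₀ ℕ) :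
    degA a (p + q) = degA a p + degA a q := by
  unfold degA
  rw [← Finset.sum_add_distrib]
  refine Finset.sum_congr rfl fun i _ => ?_
  simp [add_smul]

noncomputable def projA {n d : ℕ} (a : Fin n → Fin d → ℤ) (b : Fin d → ℤ)
    (f : MvPolynomial (Fin n) K) : MvPolynomial (Fin n) K :=
  AddMonoidAlgebra.ofCoeff ((AddMonoidAlgebra.coeff f).filter (fun m => degA a m = b))

lemma projA_coeff {n d : ℕ} (a : Fin n → Fin d → ℤ) (b : Fin d → ℤ)
    (f : MvPolynomial (Fin n) K) (m : Fin n →₀ ℕ) :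
    coeff m (projA K a b f) = if degA a m = b then coeff m f else 0 := rfl

lemma projA_monomial_mul {n d : ℕ} (a : Fin n → Fin d → ℤ) (b : Fin d → ℤ)
    (m : Fin n →₀ ℕ) (c : K) (f : MvPolynomial (Fin n) K) :
    projA K a b (monomial m c * f) = monomial m c * projA K a (fun i => b i - degA a m i) f := by
  ext m'
  rw [projA_coeff, coeff_monomial_mul', coeff_monomial_mul', projA_coeff]
  by_cases hle : m ≤ m'
  · simp only [if_pos hle]
    have hdeg : degA a m' = degA a (m' - m) + degA a m := by
      rw [← degA_add, tsub_add_cancel_of_le hle]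
    have : (degA a m' = b) ↔ (degA a (m' - m) = fun i => b i - degA a m i) := by
      constructor
      · intro h; funext i
        have h1 := congrFun hdeg i; have h2 := congrFun h i
        simp only [Pi.add_apply] at h1
        omega
      · intro h; funext i
        have h1 := congrFun hdeg i; have h2 := congrFun h i
        simp only [Pi.add_apply] at h1
        omega
    by_cases hb : degA a m' = b
    · rw [if_pos hb, if_pos (this.mp hb)]
    · rw [if_neg hb, if_neg (fun hh => hb (this.mpr hh)), mul_zero]
  · simp [if_neg hle]

lemma projA_mem {n d : ℕ} (a : Fin n → Fin d → ℤ) (S : Set (MvPolynomial (Fin n) K))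
    (hS : ∀ f ∈ S, ∃ p q : Fin n →₀ ℕ, degA a p = degA a q ∧
      f = monomial p (1 : K) - monomial q (1 : K))
    {f : MvPolynomial (Fin n) K} (hf : f ∈ Ideal.span S) (b : Fin d → ℤ) :
    projA K a b f ∈ Ideal.span S := by
  classical
  revert b
  refine Submodule.span_induction (p := fun f _ => ∀ b, projA K a b f ∈ Ideal.span S)
    ?_ ?_ ?_ ?_ hf
  · rintro x hx b
    obtain ⟨p, q, hpq, rfl⟩ := hS x hx
    have : projA K a b (monomial p (1:K) - monomial q 1) =
        if degA a p = b then monomial p (1:K) - monomial q 1 else 0 := by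
      ext m
      rw [projA_coeff]
      by_cases hb : degA a p = b
      · rw [if_pos hb]
        by_cases hm : degA a m = b
        · rw [if_pos hm]
        · rw [if_neg hm]
          simp only [coeff_sub, coeff_monomial]
          rw [if_neg (fun h : p = m => hm (by rw [← h]; exact hb)),
            if_neg (fun h : q = m => hm (by rw [← h, ← hpq]; exact hb))]
          ring
      · rw [if_neg hb, coeff_zero]
        by_cases hm : degA a m = b
        · rw [if_pos hm]
          simp only [coeff_sub, coeff_monomial]
          rw [if_neg (fun h : p = m => hb (by rw [h]; exact hm)),
            if_neg (fun h : q = m => hb (by rw [hpq, h]; exact hm))]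
          ring
        · rw [if_neg hm]
    rw [this]
    split_ifs
    · exact Ideal.subset_span hx
    · exact Ideal.zero_mem _
  · intro b
    have : projA K a b (0 : MvPolynomial (Fin n) K) = 0 := by
      ext m; rw [projA_coeff]; simp
    rw [this]; exact Ideal.zero_mem _
  · intro x y _ _ hx hy b
    have : projA K a b (x + y) = projA K a b x + projA K a b y := by
      ext m; rw [projA_coeff]; simp only [coeff_add, projA_coeff]; split_ifs <;> simp
    rw [this]; exact Ideal.add_mem _ (hx b) (hy b)
  · intro r x _ hx b
    show projA K a b (r * x) ∈ Ideal.span S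
    have hr : r * x = ∑ v ∈ r.support, monomial v (coeff v r) * x := by
      rw [← Finset.sum_mul, ← r.as_sum]
    rw [hr]
    have hsum : projA K a b (∑ v ∈ r.support, monomial v (coeff v r) * x) =
        ∑ v ∈ r.support, projA K a b (monomial v (coeff v r) * x) := by
      ext m; rw [projA_coeff]
      rw [show coeff m (∑ v ∈ r.support, projA K a b (monomial v (coeff v r) * x)) =
        ∑ v ∈ r.support, coeff m (projA K a b (monomial v (coeff v r) * x)) from
          (coeff_sum _ _ _)]
      simp only [projA_coeff]
      split_ifs with h
      · rw [coeff_sum]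
      · simp
    rw [hsum]
    refine Ideal.sum_mem _ fun v _ => ?_
    rw [projA_monomial_mul]
    exact Ideal.mul_mem_left _ _ (hx _)

lemma monomial_not_mem_toric {n d : ℕ} (a : Fin n → Fin d → ℤ) (u : Fin n →₀ ℕ) :
    (monomial u (1 : K) : MvPolynomial (Fin n) K) ∉ toricIdeal K a := by
  intro h
  have hle : toricIdeal K a ≤
      RingHom.ker (eval (fun _ => (1:K)) : MvPolynomial (Fin n) K →+* K) := by
    rw [toricIdeal, Ideal.span_le]
    rintro f ⟨p, q, -, rfl⟩
    simp [RingHom.mem_ker, eval_monomial, Finsupp.prod]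
  have := hle h
  simp [RingHom.mem_ker, eval_monomial] at this

lemma J_le_toric {n d : ℕ} (a : Fin n → Fin d → ℤ) {J : Ideal (MvPolynomial (Fin n) K)}
    (hJ : IsAHomogPureDiff K a J) : J ≤ toricIdeal K a := by
  obtain ⟨S, hS, rfl⟩ := hJ
  rw [Ideal.span_le]
  intro f hf
  obtain ⟨p, q, hpq, rfl⟩ := hS f hf
  exact Ideal.subset_span ⟨p, q, hpq, rfl⟩

lemma binomial_homog {n d : ℕ} (a : Fin n → Fin d → ℤ) {J : Ideal (MvPolynomial (Fin n) K)}
    (hJ : IsAHomogPureDiff K a J) {p q : Fin n →₀ ℕ}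
    (h : monomial p (1 : K) - monomial q 1 ∈ J) :
    degA a p = degA a q := by
  by_contra hdeg
  obtain ⟨S, hS, rfl⟩ := hJ
  have hproj := projA_mem K a S hS h (degA a p)
  have heq : projA K a (degA a p) (monomial p (1:K) - monomial q 1) = monomial p 1 := by
    ext m
    rw [projA_coeff]
    simp only [coeff_sub, coeff_monomial]
    by_cases hm : degA a m = degA a p
    · rw [if_pos hm, if_neg (fun h : q = m => hdeg (by rw [h]; exact hm.symm)), sub_zero]
    · rw [if_neg hm, if_neg (fun h : p = m => hm (by rw [← h]))]
  rw [heq] at hproj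
  exact monomial_not_mem_toric K a p
    (J_le_toric K a ⟨S, hS, rfl⟩ hproj)

lemma exists_w {n d : ℕ} (a : Fin n → Fin d → ℤ) {J : Ideal (MvPolynomial (Fin n) K)}
    (hJ : IsAHomogPureDiff K a J) {u : Fin n →₀ ℕ}
    (hmem : (monomial u (1 : K) : MvPolynomial (Fin n) K) ∈ MIdeal K J) :
    ∃ w : Fin n →₀ ℕ, w ≠ u ∧ degA a w = degA a u ∧
      monomial u (1 : K) - monomial w 1 ∈ J := by
  have hset : { m | ∃ p v : Fin n →₀ ℕ, p ≠ v ∧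
      (monomial p (1 : K) - monomial v (1 : K)) ∈ J ∧ m = monomial p (1 : K) }
      = (fun s => monomial s (1:K)) ''
        {p : Fin n →₀ ℕ | ∃ v, p ≠ v ∧ monomial p (1:K) - monomial v 1 ∈ J} := by
    ext f
    constructor
    · rintro ⟨p, v, h1, h2, rfl⟩; exact ⟨p, ⟨v, h1, h2⟩, rfl⟩
    · rintro ⟨p, ⟨v, h1, h2⟩, rfl⟩; exact ⟨p, v, h1, h2, rfl⟩
  rw [MIdeal, hset, mem_ideal_span_monomial_image] at hmem
  have hu : u ∈ (monomial u (1:K) : MvPolynomial (Fin n) K).support := by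
    rw [mem_support_iff, coeff_monomial, if_pos rfl]; exact one_ne_zero
  obtain ⟨p, ⟨v, hpv, hbin⟩, hle⟩ := hmem u hu
  have hcancel : u - p + p = u := tsub_add_cancel_of_le hle
  have hdegpv : degA a p = degA a v := binomial_homog K a hJ hbin
  refine ⟨u - p + v, ?_, ?_, ?_⟩
  · intro hw
    apply hpv
    have : u - p + p = u - p + v := by rw [hcancel, hw]
    exact add_left_cancel this
  · rw [degA_add, hdegpv.symm, ← degA_add, hcancel]
  · have key : monomial u (1:K) - monomial (u - p + v) 1
        = monomial (u - p) (1:K) * (monomial p 1 - monomial v 1) := by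
      rw [mul_sub, monomial_mul, monomial_mul, one_mul, hcancel]
    rw [key]
    exact Ideal.mul_mem_left _ _ hbin

/-- If `x^u ∈ M_J` and `x^u` is an indispensable monomial of the toric ideal
`I_A`, then `x^u` is an indispensable monomial of `J`. -/
theorem statement3 {n d : ℕ} (a : Fin n → Fin d → ℤ) (hA : NoUnits a)
    (J : Ideal (MvPolynomial (Fin n) K)) (hJ : IsAHomogPureDiff K a J)
    (u : Fin n →₀ ℕ)
    (hmem : (monomial u (1 : K) : MvPolynomial (Fin n) K) ∈ MIdeal K J)
    (hind : IndispMonomial K (toricIdeal K a) u) :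
    IndispMonomial K J u := by
  intro S hSgen
  obtain ⟨w, hwu, hdegw, hbinw⟩ := exists_w K a hJ hmem
  set T : Set (MvPolynomial (Fin n) K) :=
    { f | ∃ p q : Fin n →₀ ℕ, degA a p = degA a q ∧ p ≠ u ∧ q ≠ u ∧
      f = monomial p (1:K) - monomial q 1 } with hT
  have hJle2 : J ≤ Ideal.span (S ∪ T) := by
    rw [← hSgen.2]; exact Ideal.span_mono Set.subset_union_left
  have hgen : IsBinomGenSet K (toricIdeal K a) (S ∪ T) := by
    constructor
    · rintro f (hf | ⟨p, q, _, _, _, rfl⟩)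
      · exact hSgen.1 f hf
      · exact ⟨p, q, rfl⟩
    · apply le_antisymm
      · rw [Ideal.span_le]
        rintro f (hf | ⟨p, q, hpq, _, _, rfl⟩)
        · exact J_le_toric K a hJ (hSgen.2 ▸ Ideal.subset_span hf)
        · exact Ideal.subset_span ⟨p, q, hpq, rfl⟩
      · rw [toricIdeal, Ideal.span_le]
        rintro f ⟨p, q, hpq, rfl⟩
        by_cases hp : p = u
        · rw [hp] at hpq ⊢
          by_cases hq : q = u
          · rw [hq]; simp
          · have hsplit : monomial u (1:K) - monomial q 1
                = (monomial u (1:K) - monomial w 1) + (monomial w 1 - monomial q 1) := by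
              ring
            rw [hsplit]
            exact Ideal.add_mem _ (hJle2 hbinw)
              (Ideal.subset_span (Or.inr ⟨w, q, hdegw.trans hpq, hwu, hq, rfl⟩))
        · by_cases hq : q = u
          · rw [hq] at hpq ⊢
            have hsplit : monomial p (1:K) - monomial u 1
                = (monomial p (1:K) - monomial w 1) + (monomial w 1 - monomial u 1) := by
              ring
            rw [hsplit]
            refine Ideal.add_mem _
              (Ideal.subset_span (Or.inr ⟨p, w, hpq.trans hdegw.symm, hp, hwu, rfl⟩)) ?_
            have : monomial w (1:K) - monomial u 1 = -(monomial u (1:K) - monomial w 1) := by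
              ring
            rw [this]
            exact neg_mem (hJle2 hbinw)
          · exact Ideal.subset_span (Or.inr ⟨p, q, hpq, hp, hq, rfl⟩)
  obtain ⟨f, hf, hfu⟩ := hind (S ∪ T) hgen
  rcases hf with hf | ⟨p, q, _, hp, hq, rfl⟩
  · exact ⟨f, hf, hfu⟩
  · exfalso
    rw [mem_support_iff] at hfu
    apply hfu
    rw [coeff_sub, coeff_monomial, coeff_monomial, if_neg hp, if_neg hq, sub_zero]
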